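/- For every n ≥ 1 and all i, j ≥ 0, the counts s_{m,i,j} = #{π ∈ S_m : cpk^o(π) = i, cpk^e(π) = j} satisfy the Schett–Dumont recurrence s_{2n,i,j} = (2j+1)·s_{2n−1,i,j} + (2i+2)·s_{2n−1,i+1,j−1} + (2n−2i−2j+1)·s_{2n−1,i,j−1}, where any term with a negative index is interpreted as 0. -/

import Mathlib

open Finset

/-- Number of odd cycle peaks of a permutation of `[n]` (the element `i : Fin n`
represents the value `i+1 ∈ {1,…,n}`). -/
def cpko (n : ℕ) (π : Equiv.Perm (Fin n)) : ℕ :=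
  (Finset.univ.filter fun i : Fin n => π.symm i < i ∧ π i < i ∧ Odd ((i : ℕ) + 1)).card

/-- Number of even cycle peaks of a permutation of `[n]`. -/
def cpke (n : ℕ) (π : Equiv.Perm (Fin n)) : ℕ :=
  (Finset.univ.filter fun i : Fin n => π.symm i < i ∧ π i < i ∧ Even ((i : ℕ) + 1)).card

/-- `s m i j = #{π ∈ S_m : cpk^o(π) = i, cpk^e(π) = j}`. -/
def s (m i j : ℕ) : ℕ :=
  (Finset.univ.filter fun π : Equiv.Perm (Fin m) => cpko m π = i ∧ cpke m π = j).card

namespace SchettAux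
open Equiv
variable {m : ℕ}

def ext (σ : Equiv.Perm (Fin m)) : Equiv.Perm (Fin (m+1)) where
  toFun := Fin.lastCases (Fin.last m) (fun a => (σ a).castSucc)
  invFun := Fin.lastCases (Fin.last m) (fun a => (σ.symm a).castSucc)
  left_inv := by
    intro i; induction i using Fin.lastCases <;> simp
  right_inv := by
    intro i; induction i using Fin.lastCases <;> simp

@[simp] lemma ext_last (σ : Perm (Fin m)) : ext σ (Fin.last m) = Fin.last m := by
  simp [ext]

@[simp] lemma ext_castSucc (σ : Perm (Fin m)) (a : Fin m) :
    ext σ a.castSucc = (σ a).castSucc := by simp [ext]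

@[simp] lemma ext_symm_last (σ : Perm (Fin m)) : (ext σ).symm (Fin.last m) = Fin.last m := by
  simp [ext]

@[simp] lemma ext_symm_castSucc (σ : Perm (Fin m)) (a : Fin m) :
    (ext σ).symm a.castSucc = (σ.symm a).castSucc := by simp [ext]

def ins (σ : Perm (Fin m)) (x : Fin (m+1)) : Perm (Fin (m+1)) :=
  (Equiv.swap x (Fin.last m)).trans (ext σ)

lemma ins_apply (σ : Perm (Fin m)) (x b : Fin (m+1)) :
    ins σ x b = ext σ (Equiv.swap x (Fin.last m) b) := rfl

lemma ins_symm_apply (σ : Perm (Fin m)) (x b : Fin (m+1)) :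
    (ins σ x).symm b = Equiv.swap x (Fin.last m) ((ext σ).symm b) := rfl

lemma ins_injective :
    Function.Injective (fun p : Perm (Fin m) × Fin (m+1) => ins p.1 p.2) := by
  rintro ⟨σ, x⟩ ⟨σ', x'⟩ h
  simp only at h
  have hx : x = x' := by
    have h1 : (ins σ x).symm (Fin.last m) = x := by
      rw [ins_symm_apply, ext_symm_last, Equiv.swap_apply_right]
    have h2 : (ins σ' x').symm (Fin.last m) = x' := by
      rw [ins_symm_apply, ext_symm_last, Equiv.swap_apply_right]
    rw [← h1, ← h2, h]
  subst hx
  have hσ : σ = σ' := by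
    ext a
    have := congrArg (fun τ : Perm (Fin (m+1)) => τ (Equiv.swap x (Fin.last m) a.castSucc)) h
    simp only [ins_apply, Equiv.swap_apply_self] at this
    rw [ext_castSucc, ext_castSucc] at this
    exact congrArg Fin.val (Fin.castSucc_inj.mp this)
  rw [hσ]

lemma ins_bijective :
    Function.Bijective (fun p : Perm (Fin m) × Fin (m+1) => ins p.1 p.2) := by
  rw [Fintype.bijective_iff_injective_and_card]
  refine ⟨ins_injective, ?_⟩
  simp [Fintype.card_perm, Nat.factorial_succ, mul_comm]

lemma card_filter_eq_sum (P : Perm (Fin (m+1)) → Prop) [DecidablePred P] :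
    (univ.filter P).card = ∑ σ : Perm (Fin m), (univ.filter fun x => P (ins σ x)).card := by
  have h : (univ.filter P).card
      = (univ.filter fun p : Perm (Fin m) × Fin (m+1) => P (ins p.1 p.2)).card := by
    refine (Finset.card_bij (fun p _ => ins p.1 p.2) ?_ ?_ ?_).symm
    · intro p hp; simpa using (Finset.mem_filter.mp hp).2
    · intro p hp q hq h; exact ins_injective h
    · intro π hπ
      obtain ⟨p, hp⟩ := ins_bijective.surjective π
      exact ⟨p, by simp [hp, (Finset.mem_filter.mp hπ).2], hp⟩
  rw [h, Finset.card_filter, Fintype.sum_prod_type]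
  exact Finset.sum_congr rfl fun σ _ => (Finset.card_filter _ _).symm

abbrev pk (σ : Perm (Fin m)) (b : Fin m) : Prop := σ.symm b < b ∧ σ b < b

abbrev opk (σ : Perm (Fin m)) (a : Fin m) : Prop := pk σ a ∧ Odd ((a : ℕ) + 1)
abbrev epk (σ : Perm (Fin m)) (a : Fin m) : Prop := pk σ a ∧ Even ((a : ℕ) + 1)

def OP (σ : Perm (Fin m)) : Finset (Fin m) := univ.filter (opk σ)
def EP (σ : Perm (Fin m)) : Finset (Fin m) := univ.filter (epk σ)

abbrev good (σ : Perm (Fin m)) (x : Fin (m+1)) (a : Fin m) : Prop :=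
  x ≠ a.castSucc ∧ x ≠ (σ.symm a).castSucc

lemma pk_ins_castSucc (σ : Perm (Fin m)) (x : Fin (m+1)) (a : Fin m) :
    pk (ins σ x) a.castSucc ↔ pk σ a ∧ good σ x a := by
  have hlt : ∀ c : Fin m, ¬ (Fin.last m < c.castSucc) := fun c => not_lt.mpr (Fin.castSucc_lt_last c).le
  have h1 : ins σ x a.castSucc = if x = a.castSucc then Fin.last m else (σ a).castSucc := by
    rcases eq_or_ne x a.castSucc with h | h
    · simp [ins_apply, ← h, Equiv.swap_apply_left]
    · rw [ins_apply, Equiv.swap_apply_of_ne_of_ne (Ne.symm h) (Fin.castSucc_lt_last a).ne,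
        ext_castSucc, if_neg h]
  have h2 : (ins σ x).symm a.castSucc =
      if x = (σ.symm a).castSucc then Fin.last m else (σ.symm a).castSucc := by
    rcases eq_or_ne x ((σ.symm a).castSucc) with h | h
    · simp [ins_symm_apply, ← h, Equiv.swap_apply_left]
    · rw [ins_symm_apply, ext_symm_castSucc,
        Equiv.swap_apply_of_ne_of_ne (Ne.symm h) (Fin.castSucc_lt_last _).ne, if_neg h]
  unfold pk good
  rw [h1, h2]
  split_ifs with h h' h'
  · simp [hlt, h']
  · simp [hlt, h]
  · simp [hlt, h']
  · simp [Fin.castSucc_lt_castSucc_iff, h, h', and_comm]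

lemma pk_ins_last (σ : Perm (Fin m)) (x : Fin (m+1)) :
    pk (ins σ x) (Fin.last m) ↔ x ≠ Fin.last m := by
  have h2 : (ins σ x).symm (Fin.last m) = x := by
    rw [ins_symm_apply, ext_symm_last, Equiv.swap_apply_right]
  constructor
  · rintro ⟨h, -⟩ rfl
    rw [h2] at h; exact lt_irrefl _ h
  · intro hx
    have h1 : ins σ x (Fin.last m) = ext σ x := by
      rw [ins_apply, Equiv.swap_apply_right]
    constructor
    · rw [h2]; exact Fin.lt_last_iff_ne_last.mpr hx
    · rw [h1, ← Fin.castSucc_castPred x hx, ext_castSucc]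
      exact Fin.castSucc_lt_last _

lemma cpko_eq (σ : Perm (Fin m)) : cpko m σ = (OP σ).card := by
  unfold cpko OP
  congr 1
  apply Finset.filter_congr
  intro a _
  simp [opk, pk, and_assoc]

lemma cpke_eq (σ : Perm (Fin m)) : cpke m σ = (EP σ).card := by
  unfold cpke EP
  congr 1
  apply Finset.filter_congr
  intro a _
  simp [epk, pk, and_assoc]

lemma cpko_ins (hE : Even (m+1)) (σ : Perm (Fin m)) (x : Fin (m+1)) :
    cpko (m+1) (ins σ x) = ((OP σ).filter (good σ x)).card := by
  rw [cpko, Finset.card_filter, Fin.sum_univ_castSucc]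
  have hlast : ¬ Odd (((Fin.last m : Fin (m+1)) : ℕ) + 1) := by
    rw [Fin.val_last]; exact (Nat.not_odd_iff_even.mpr hE)
  rw [if_neg (by tauto)]
  rw [OP, Finset.filter_filter, Finset.card_filter, add_zero]
  refine Finset.sum_congr rfl fun a _ => ?_
  refine if_congr ?_ rfl rfl
  have h := pk_ins_castSucc σ x a
  unfold pk at h
  unfold opk pk good at *
  rw [Fin.coe_castSucc]
  tauto

lemma cpke_ins (hE : Even (m+1)) (σ : Perm (Fin m)) (x : Fin (m+1)) :
    cpke (m+1) (ins σ x) = ((EP σ).filter (good σ x)).card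
      + (if x = Fin.last m then 0 else 1) := by
  rw [cpke, Finset.card_filter, Fin.sum_univ_castSucc]
  congr 1
  · rw [EP, Finset.filter_filter, Finset.card_filter]
    refine Finset.sum_congr rfl fun a _ => ?_
    refine if_congr ?_ rfl rfl
    have h := pk_ins_castSucc σ x a
    unfold pk at h
    unfold epk pk good at *
    rw [Fin.coe_castSucc]
    tauto
  · have h := pk_ins_last σ x
    unfold pk at h
    have hlast : Even (((Fin.last m : Fin (m+1)) : ℕ) + 1) := by
      rw [Fin.val_last]; exact hE
    rcases eq_or_ne x (Fin.last m) with hx | hx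
    · rw [if_neg (by tauto), if_pos hx]
    · rw [if_pos (by tauto), if_neg hx]

lemma touch_unique (σ : Perm (Fin m)) {a b c : Fin m} (ha : pk σ a) (hb : pk σ b)
    (h1 : c = a ∨ c = σ.symm a) (h2 : c = b ∨ c = σ.symm b) : a = b := by
  obtain ⟨ha1, ha2⟩ := ha
  obtain ⟨hb1, hb2⟩ := hb
  rcases h1 with h1 | h1 <;> rcases h2 with h2 | h2
  · rw [← h1, h2]
  · exfalso
    have e1 : σ.symm b = a := by rw [← h2]; exact h1
    have e2 : b = σ a := by rw [← e1, σ.apply_symm_apply]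
    rw [e1] at hb1
    rw [← e2] at ha2
    exact absurd (hb1.trans ha2) (lt_irrefl _)
  · exfalso
    have e1 : σ.symm a = b := by rw [← h1]; exact h2
    have e2 : a = σ b := by rw [← e1, σ.apply_symm_apply]
    rw [e1] at ha1
    rw [← e2] at hb2
    exact absurd (ha1.trans hb2) (lt_irrefl _)
  · exact σ.symm.injective (h1 ▸ h2 : σ.symm a = σ.symm b)

lemma good_last (σ : Perm (Fin m)) (a : Fin m) : good σ (Fin.last m) a :=
  ⟨(Fin.castSucc_lt_last a).ne', (Fin.castSucc_lt_last _).ne'⟩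

lemma filter_good_touched (σ : Perm (Fin m)) {c a₀ : Fin m} (h₀ : pk σ a₀)
    (hw : c = a₀ ∨ c = σ.symm a₀) (S : Finset (Fin m)) (hS : ∀ a ∈ S, pk σ a) :
    S.filter (good σ c.castSucc) = S.erase a₀ := by
  ext a
  simp only [Finset.mem_filter, Finset.mem_erase]
  constructor
  · rintro ⟨haS, hg⟩
    refine ⟨?_, haS⟩
    rintro rfl
    rcases hw with rfl | rfl
    · exact hg.1 rfl
    · exact hg.2 rfl
  · rintro ⟨hne, haS⟩
    refine ⟨haS, ?_, ?_⟩
    · intro h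
      exact hne (touch_unique σ (hS a haS) h₀ (Or.inl (Fin.castSucc_inj.mp h)) hw)
    · intro h
      exact hne (touch_unique σ (hS a haS) h₀ (Or.inr (Fin.castSucc_inj.mp h)) hw)

lemma filter_good_untouched (σ : Perm (Fin m)) {c : Fin m}
    (h : ∀ a, pk σ a → ¬(c = a ∨ c = σ.symm a)) (S : Finset (Fin m))
    (hS : ∀ a ∈ S, pk σ a) : S.filter (good σ c.castSucc) = S := by
  apply Finset.filter_true_of_mem
  intro a haS
  have hna := h a (hS a haS)
  exact ⟨fun hh => hna (Or.inl (Fin.castSucc_inj.mp hh)),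
    fun hh => hna (Or.inr (Fin.castSucc_inj.mp hh))⟩

lemma card_filter_comp (p : Fin m → Prop) [DecidablePred p] (σ : Perm (Fin m)) :
    (univ.filter fun c => p (σ c)).card = (univ.filter p).card := by
  refine Finset.card_bij' (fun c _ => σ c) (fun b _ => σ.symm b) ?_ ?_ ?_ ?_
  · intro a ha; simpa using (Finset.mem_filter.mp ha).2
  · intro b hb; simpa using (Finset.mem_filter.mp hb).2
  · intro a _; simp
  · intro b _; simp

abbrev tO (σ : Perm (Fin m)) (c : Fin m) : Prop := opk σ c ∨ opk σ (σ c)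
abbrev tE (σ : Perm (Fin m)) (c : Fin m) : Prop := epk σ c ∨ epk σ (σ c)

lemma not_pk_and_pk_apply (σ : Perm (Fin m)) (c : Fin m) (h1 : pk σ c) (h2 : pk σ (σ c)) :
    False := by
  have hlt := h1.2
  have h3 : σ.symm (σ c) < σ c := h2.1
  rw [σ.symm_apply_apply] at h3
  exact absurd (hlt.trans h3) (lt_irrefl _)

lemma card_tO (σ : Perm (Fin m)) : (univ.filter (tO σ)).card = 2 * (OP σ).card := by
  have hsplit : univ.filter (tO σ)
      = (univ.filter (opk σ)) ∪ (univ.filter fun c => opk σ (σ c)) := by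
    rw [← Finset.filter_or]
  have hd : Disjoint (univ.filter (opk σ)) (univ.filter fun c => opk σ (σ c)) := by
    rw [Finset.disjoint_left]
    intro c h1 h2
    simp only [Finset.mem_filter] at h1 h2
    exact not_pk_and_pk_apply σ c h1.2.1 h2.2.1
  rw [hsplit, Finset.card_union_of_disjoint hd, card_filter_comp (opk σ) σ, OP]
  ring

lemma card_tE (σ : Perm (Fin m)) : (univ.filter (tE σ)).card = 2 * (EP σ).card := by
  have hsplit : univ.filter (tE σ)
      = (univ.filter (epk σ)) ∪ (univ.filter fun c => epk σ (σ c)) := by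
    rw [← Finset.filter_or]
  have hd : Disjoint (univ.filter (epk σ)) (univ.filter fun c => epk σ (σ c)) := by
    rw [Finset.disjoint_left]
    intro c h1 h2
    simp only [Finset.mem_filter] at h1 h2
    exact not_pk_and_pk_apply σ c h1.2.1 h2.2.1
  rw [hsplit, Finset.card_union_of_disjoint hd, card_filter_comp (epk σ) σ, EP]
  ring

lemma tO_not_tE (σ : Perm (Fin m)) (c : Fin m) (h1 : tO σ c) (h2 : tE σ c) : False := by
  rcases h1 with h1 | h1 <;> rcases h2 with h2 | h2
  · exact (Nat.not_odd_iff_even.mpr h2.2) h1.2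
  · exact not_pk_and_pk_apply σ c h1.1 h2.1
  · exact not_pk_and_pk_apply σ c h2.1 h1.1
  · exact (Nat.not_odd_iff_even.mpr h2.2) h1.2

lemma sum_indic {α : Type*} [Fintype α] (p : α → Prop) [DecidablePred p] (u : ℕ) :
    ∑ c : α, (if p c then u else 0) = (univ.filter p).card * u := by
  rw [← Finset.sum_filter, Finset.sum_const, smul_eq_mul]

lemma sum_three (p q : Fin m → Prop) [DecidablePred p] [DecidablePred q]
    (hpq : ∀ c, p c → ¬ q c) (u v w : ℕ) :
    ∑ c : Fin m, (if p c then u else if q c then v else w)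
      = (univ.filter p).card * u + (univ.filter q).card * v
        + (m - (univ.filter p).card - (univ.filter q).card) * w := by
  have h1 : ∀ c, (if p c then u else if q c then v else w)
      = (if p c then u else 0) + ((if q c then v else 0)
          + (if ¬ p c ∧ ¬ q c then w else 0)) := by
    intro c
    by_cases hp : p c
    · simp [hp, hpq c hp]
    · by_cases hq : q c <;> simp [hp, hq]
  rw [Finset.sum_congr rfl fun c _ => h1 c, Finset.sum_add_distrib, Finset.sum_add_distrib,
    sum_indic, sum_indic, sum_indic]
  have hq' : univ.filter q = univ.filter fun c => ¬ p c ∧ q c := by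
    apply Finset.filter_congr
    intro c _
    constructor
    · intro h; exact ⟨fun hp => hpq c hp h, h⟩
    · exact fun h => h.2
  have ha := Finset.card_filter_add_card_filter_not (s := (univ : Finset (Fin m))) (p := p)
  have hb := Finset.card_filter_add_card_filter_not
    (s := (univ.filter fun c => ¬ p c)) (p := q)
  rw [Finset.filter_filter, Finset.filter_filter] at hb
  rw [Finset.card_univ, Fintype.card_fin] at ha
  have hc : (univ.filter fun c => ¬ p c ∧ ¬ q c).card
      = m - (univ.filter p).card - (univ.filter q).card := by
    rw [hq']
    omega
  rw [hc]; ring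

lemma count_x (hE : Even (m+1)) (σ : Perm (Fin m)) (i j : ℕ) :
    (univ.filter fun x : Fin (m+1) =>
        cpko (m+1) (ins σ x) = i ∧ cpke (m+1) (ins σ x) = j).card
      = (if cpko m σ = i ∧ cpke m σ = j then 2 * cpke m σ + 1 else 0)
        + (if cpko m σ = i + 1 ∧ cpke m σ + 1 = j then 2 * cpko m σ else 0)
        + (if cpko m σ = i ∧ cpke m σ + 1 = j
            then m - 2 * cpko m σ - 2 * cpke m σ else 0) := by
  have hOP : ∀ a ∈ OP σ, pk σ a := fun a ha => (Finset.mem_filter.mp ha).2.1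
  have hEP : ∀ a ∈ EP σ, pk σ a := fun a ha => (Finset.mem_filter.mp ha).2.1
  have hlast1 : cpko (m+1) (ins σ (Fin.last m)) = cpko m σ := by
    rw [cpko_ins hE, Finset.filter_true_of_mem (fun a _ => good_last σ a), cpko_eq]
  have hlast2 : cpke (m+1) (ins σ (Fin.last m)) = cpke m σ := by
    rw [cpke_ins hE, Finset.filter_true_of_mem (fun a _ => good_last σ a), if_pos rfl,
      add_zero, cpke_eq]
  have hpoint : ∀ c : Fin m,
      (if cpko (m+1) (ins σ c.castSucc) = i ∧ cpke (m+1) (ins σ c.castSucc) = j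
        then 1 else 0)
      = (if tO σ c then (if cpko m σ = i + 1 ∧ cpke m σ + 1 = j then 1 else 0)
         else if tE σ c then (if cpko m σ = i ∧ cpke m σ = j then 1 else 0)
         else (if cpko m σ = i ∧ cpke m σ + 1 = j then 1 else 0)) := by
    intro c
    have hcnel : c.castSucc ≠ Fin.last m := (Fin.castSucc_lt_last c).ne
    by_cases htO : tO σ c
    · obtain ⟨a₀, h₀, hodd, hw⟩ : ∃ a₀, pk σ a₀ ∧ Odd ((a₀ : ℕ) + 1)
          ∧ (c = a₀ ∨ c = σ.symm a₀) := by
        rcases htO with h | h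
        · exact ⟨c, h.1, h.2, Or.inl rfl⟩
        · exact ⟨σ c, h.1, h.2, Or.inr (by simp)⟩
      have hOPmem : a₀ ∈ OP σ := Finset.mem_filter.mpr ⟨Finset.mem_univ _, h₀, hodd⟩
      have hEPnot : a₀ ∉ EP σ := by
        intro h
        exact (Nat.not_odd_iff_even.mpr (Finset.mem_filter.mp h).2.2) hodd
      have h1 : cpko (m+1) (ins σ c.castSucc) = cpko m σ - 1 := by
        rw [cpko_ins hE, filter_good_touched σ h₀ hw _ hOP,
          Finset.card_erase_of_mem hOPmem, cpko_eq]
      have h2 : cpke (m+1) (ins σ c.castSucc) = cpke m σ + 1 := by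
        rw [cpke_ins hE, filter_good_touched σ h₀ hw _ hEP,
          Finset.erase_eq_of_notMem hEPnot, if_neg hcnel, cpke_eq]
      have hge : 1 ≤ cpko m σ := by
        rw [cpko_eq]; exact Finset.card_pos.mpr ⟨a₀, hOPmem⟩
      rw [if_pos htO, h1, h2]
      have hiff : (cpko m σ - 1 = i ∧ cpke m σ + 1 = j)
          ↔ (cpko m σ = i + 1 ∧ cpke m σ + 1 = j) := by omega
      exact if_congr hiff rfl rfl
    · by_cases htE : tE σ c
      · obtain ⟨a₀, h₀, heven, hw⟩ : ∃ a₀, pk σ a₀ ∧ Even ((a₀ : ℕ) + 1)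
            ∧ (c = a₀ ∨ c = σ.symm a₀) := by
          rcases htE with h | h
          · exact ⟨c, h.1, h.2, Or.inl rfl⟩
          · exact ⟨σ c, h.1, h.2, Or.inr (by simp)⟩
        have hEPmem : a₀ ∈ EP σ := Finset.mem_filter.mpr ⟨Finset.mem_univ _, h₀, heven⟩
        have hOPnot : a₀ ∉ OP σ := by
          intro h
          exact (Nat.not_odd_iff_even.mpr heven) (Finset.mem_filter.mp h).2.2
        have h1 : cpko (m+1) (ins σ c.castSucc) = cpko m σ := by
          rw [cpko_ins hE, filter_good_touched σ h₀ hw _ hOP,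
            Finset.erase_eq_of_notMem hOPnot, cpko_eq]
        have h2 : cpke (m+1) (ins σ c.castSucc) = cpke m σ := by
          have hge : 1 ≤ (EP σ).card := Finset.card_pos.mpr ⟨a₀, hEPmem⟩
          rw [cpke_ins hE, filter_good_touched σ h₀ hw _ hEP,
            Finset.card_erase_of_mem hEPmem, if_neg hcnel, cpke_eq]
          omega
        rw [if_neg htO, if_pos htE, h1, h2]
      · have huntouch : ∀ a, pk σ a → ¬(c = a ∨ c = σ.symm a) := by
          intro a hpk hor
          rcases Nat.even_or_odd ((a : ℕ) + 1) with he | ho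
          · apply htE
            rcases hor with rfl | rfl
            · exact Or.inl ⟨hpk, he⟩
            · refine Or.inr ?_
              rw [σ.apply_symm_apply]
              exact ⟨hpk, he⟩
          · apply htO
            rcases hor with rfl | rfl
            · exact Or.inl ⟨hpk, ho⟩
            · refine Or.inr ?_
              rw [σ.apply_symm_apply]
              exact ⟨hpk, ho⟩
        have h1 : cpko (m+1) (ins σ c.castSucc) = cpko m σ := by
          rw [cpko_ins hE, filter_good_untouched σ huntouch _ hOP, cpko_eq]
        have h2 : cpke (m+1) (ins σ c.castSucc) = cpke m σ + 1 := by
          rw [cpke_ins hE, filter_good_untouched σ huntouch _ hEP, if_neg hcnel, cpke_eq]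
        rw [if_neg htO, if_neg htE, h1, h2]
  rw [Finset.card_filter, Fin.sum_univ_castSucc]
  rw [Finset.sum_congr rfl fun c _ => hpoint c,
    sum_three (tO σ) (tE σ) (tO_not_tE σ) _ _ _, card_tO, card_tE, hlast1, hlast2,
    cpko_eq, cpke_eq]
  split_ifs <;> simp <;> omega

lemma hs_card (i j : ℕ) :
    (univ.filter fun σ : Perm (Fin m) => cpko m σ = i ∧ cpke m σ = j).card = s m i j := rfl

lemma op_ep_card (σ : Perm (Fin m)) :
    (OP σ).card + (EP σ).card = (univ.filter (pk σ)).card := by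
  have h1 : OP σ = (univ.filter (pk σ)).filter fun a : Fin m => Odd ((a : ℕ) + 1) := by
    rw [OP, Finset.filter_filter]
  have h2 : EP σ = (univ.filter (pk σ)).filter fun a : Fin m => ¬ Odd ((a : ℕ) + 1) := by
    rw [EP, Finset.filter_filter]
    apply Finset.filter_congr
    intro a _
    constructor
    · rintro ⟨hp, he⟩; exact ⟨hp, Nat.not_odd_iff_even.mpr he⟩
    · rintro ⟨hp, ho⟩; exact ⟨hp, Nat.not_odd_iff_even.mp ho⟩
  rw [h1, h2, Finset.card_filter_add_card_filter_not]

lemma pk_bound (σ : Perm (Fin m)) : 2 * (univ.filter (pk σ)).card ≤ m := by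
  have himg : Finset.image σ (univ.filter (pk σ)) ⊆ univ.filter fun a => ¬ pk σ a := by
    intro b hb
    simp only [Finset.mem_image, Finset.mem_filter] at *
    obtain ⟨a, ⟨-, ha⟩, rfl⟩ := hb
    exact ⟨Finset.mem_univ _, fun h => not_pk_and_pk_apply σ a ha h⟩
  have h1 : (univ.filter (pk σ)).card = (Finset.image σ (univ.filter (pk σ))).card :=
    (Finset.card_image_of_injective _ σ.injective).symm
  have h2 := Finset.card_le_card himg
  have h3 := Finset.card_filter_add_card_filter_not
    (s := (univ : Finset (Fin m))) (p := pk σ)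
  rw [Finset.card_univ, Fintype.card_fin] at h3
  omega

lemma cpk_bound (σ : Perm (Fin m)) : 2 * (cpko m σ + cpke m σ) ≤ m := by
  rw [cpko_eq, cpke_eq, op_ep_card]
  exact pk_bound σ

lemma s_bound {i j : ℕ} (hs : s m i j ≠ 0) : 2 * i + 2 * j ≤ m := by
  obtain ⟨σ, hσ⟩ : (univ.filter fun σ : Perm (Fin m) =>
      cpko m σ = i ∧ cpke m σ = j).Nonempty := by
    rw [← Finset.card_pos, hs_card]
    omega
  simp only [Finset.mem_filter] at hσ
  have hb := cpk_bound σ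
  rw [hσ.2.1, hσ.2.2] at hb
  omega

lemma master (hE : Even (m+1)) (i j : ℕ) :
    s (m+1) i j
      = (2*j+1) * s m i j
        + (if j = 0 then 0 else (2*i+2) * s m (i+1) (j-1))
        + (if j = 0 then 0 else (m - 2*i - 2*(j-1)) * s m i (j-1)) := by
  rw [show s (m+1) i j = (univ.filter fun π : Perm (Fin (m+1)) =>
      cpko (m+1) π = i ∧ cpke (m+1) π = j).card from rfl,
    card_filter_eq_sum]
  rw [Finset.sum_congr rfl fun σ _ => count_x hE σ i j]
  rw [Finset.sum_add_distrib, Finset.sum_add_distrib]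
  congr 1
  · congr 1
    · have e : ∀ σ : Perm (Fin m),
          (if cpko m σ = i ∧ cpke m σ = j then 2 * cpke m σ + 1 else 0)
          = (if cpko m σ = i ∧ cpke m σ = j then 2*j+1 else 0) := by
        intro σ; split_ifs with h
        · rw [h.2]
        · rfl
      rw [Finset.sum_congr rfl fun σ _ => e σ, sum_indic, hs_card, mul_comm]
    · by_cases hj : j = 0
      · subst hj
        simp only [if_pos rfl]
        apply Finset.sum_eq_zero
        intro σ _
        rw [if_neg (by omega)]
      · obtain ⟨jj, rfl⟩ : ∃ jj, j = jj + 1 := ⟨j - 1, by omega⟩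
        have e : ∀ σ : Perm (Fin m),
            (if cpko m σ = i + 1 ∧ cpke m σ + 1 = jj + 1 then 2 * cpko m σ else 0)
            = (if cpko m σ = i + 1 ∧ cpke m σ = jj then 2*i+2 else 0) := by
          intro σ
          have hiff : (cpko m σ = i + 1 ∧ cpke m σ + 1 = jj + 1)
              ↔ (cpko m σ = i + 1 ∧ cpke m σ = jj) := by omega
          rw [if_congr hiff rfl rfl]
          split_ifs with h
          · rw [h.1]; ring
          · rfl
        rw [Finset.sum_congr rfl fun σ _ => e σ, sum_indic, hs_card, if_neg hj]
        simp [mul_comm]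
  · by_cases hj : j = 0
    · subst hj
      simp only [if_pos rfl]
      apply Finset.sum_eq_zero
      intro σ _
      rw [if_neg (by omega)]
    · obtain ⟨jj, rfl⟩ : ∃ jj, j = jj + 1 := ⟨j - 1, by omega⟩
      have e : ∀ σ : Perm (Fin m),
          (if cpko m σ = i ∧ cpke m σ + 1 = jj + 1
            then m - 2 * cpko m σ - 2 * cpke m σ else 0)
          = (if cpko m σ = i ∧ cpke m σ = jj then m - 2*i - 2*jj else 0) := by
        intro σ
        have hiff : (cpko m σ = i ∧ cpke m σ + 1 = jj + 1)
            ↔ (cpko m σ = i ∧ cpke m σ = jj) := by omega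
        rw [if_congr hiff rfl rfl]
        split_ifs with h
        · rw [h.1, h.2]
        · rfl
      rw [Finset.sum_congr rfl fun σ _ => e σ, sum_indic, hs_card, if_neg hj]
      simp [mul_comm]

end SchettAux

/-- The Schett–Dumont recurrence
`s_{2n,i,j} = (2j+1) s_{2n-1,i,j} + (2i+2) s_{2n-1,i+1,j-1} + (2n-2i-2j+1) s_{2n-1,i,j-1}`
for `n ≥ 1`, where terms with a negative index (i.e. with `j - 1 < 0`) are interpreted
as `0`. -/
theorem stmt9 (n : ℕ) (hn : 1 ≤ n) (i j : ℕ) :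
    (s (2 * n) i j : ℤ) =
      (2 * (j : ℤ) + 1) * s (2 * n - 1) i j
        + (2 * (i : ℤ) + 2) * (if j = 0 then 0 else (s (2 * n - 1) (i + 1) (j - 1) : ℤ))
        + (2 * (n : ℤ) - 2 * i - 2 * j + 1) *
            (if j = 0 then 0 else (s (2 * n - 1) i (j - 1) : ℤ)) := by
  obtain ⟨k, rfl⟩ : ∃ k, n = k + 1 := ⟨n - 1, by omega⟩
  have h1 : 2 * (k + 1) - 1 = 2 * k + 1 := by omega
  have h2 : 2 * (k + 1) = (2 * k + 1) + 1 := by omega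
  rw [h1, h2]
  have hE : Even (2 * k + 1 + 1) := ⟨k + 1, by ring⟩
  rw [SchettAux.master hE i j]
  by_cases hj : j = 0
  · subst hj
    simp only [if_pos rfl]
    push_cast
    ring
  · rw [if_neg hj, if_neg hj, if_neg hj, if_neg hj]
    by_cases hs : s (2 * k + 1) i (j - 1) = 0
    · rw [hs]
      push_cast
      ring
    · have hb := SchettAux.s_bound (m := 2 * k + 1) hs
      have hco : (((2 * k + 1) - 2 * i - 2 * (j - 1) : ℕ) : ℤ)
          = 2 * ((k : ℤ) + 1) - 2 * i - 2 * j + 1 := by omega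
      push_cast [hco]
      ring
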